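/- Let 𝕋 be a pretheory. If f : X → Y and g : Y → Z are context morphisms, then the composite g∘f, whose i-th entry is gᵢ[f], is a context morphism from X to Z. -/

import Mathlib

set_option linter.unusedVariables false

/-! # Syntax of generalized algebraic theories (following Cartmell / the paper's appendix) -/

namespace GATPaper

/-- A sort-and-term alphabet: a countably infinite set of variables, a set of sort
symbols and a set of term symbols. -/
structure Alphabet : Type 1 where
  Var : Type
  SortSym : Type
  TermSym : Type
  var_infinite : Infinite Var
  var_countable : Countable Var

attribute [instance] Alphabet.var_infinite Alphabet.var_countable

variable {A B : Alphabet}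

/-- Term expressions over an alphabet. -/
inductive Expr (A : Alphabet) : Type where
  | var : A.Var → Expr A
  | app : A.TermSym → List (Expr A) → Expr A

/-- Sort expressions: a sort symbol applied to a list of term expressions. -/
structure SortE (A : Alphabet) : Type where
  head : A.SortSym
  args : List (Expr A)

/-- Occurrence of a variable in a term expression. -/
inductive Occurs (x : A.Var) : Expr A → Prop where
  | var : Occurs x (Expr.var x)
  | app {t : A.TermSym} {es : List (Expr A)} {e : Expr A} :
      e ∈ es → Occurs x e → Occurs x (Expr.app t es)

/-- Occurrence of a variable in a sort expression. -/
def SOccurs (x : A.Var) (U : SortE A) : Prop := ∃ e ∈ U.args, Occurs x e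

/-- Simultaneous substitution along a function on variables. -/
def Expr.subst (σ : A.Var → Expr A) : Expr A → Expr A
  | .var x => σ x
  | .app t es => .app t (es.attach.map fun e => Expr.subst σ e.1)
termination_by e => sizeOf e
decreasing_by
  have := List.sizeOf_lt_of_mem e.2
  simp only [Expr.app.sizeOf_spec]
  omega

def SortE.subst (σ : A.Var → Expr A) (U : SortE A) : SortE A :=
  ⟨U.head, U.args.map (Expr.subst σ)⟩

open Classical in
/-- The function on variables determined by a finite list of substitution pairs
`(zᵢ, uᵢ)` (substituting `uᵢ` for `zᵢ`, first matching pair winning, all other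
variables unchanged). -/
noncomputable def lookupV : List (A.Var × Expr A) → A.Var → Expr A
  | [], x => .var x
  | p :: ps, x => if p.1 = x then p.2 else lookupV ps x

/-- The simultaneous substitution `e[u₁ | z₁, …, u_k | z_k]` where
`ps = [(z₁,u₁),…,(z_k,u_k)]`. -/
noncomputable def Expr.substL (e : Expr A) (ps : List (A.Var × Expr A)) : Expr A :=
  e.subst (lookupV ps)

noncomputable def SortE.substL (U : SortE A) (ps : List (A.Var × Expr A)) : SortE A :=
  U.subst (lookupV ps)

/-- A (pre)context is a finite list of (variable, sort expression) pairs. -/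
abbrev PreCtx (A : Alphabet) := List (A.Var × SortE A)

/-- The list of variables of a precontext, as term expressions. -/
def ctxVars (X : PreCtx A) : List (Expr A) := X.map fun p => Expr.var p.1

/-- The scoping condition of a precontext: the `i`-th sort expression only contains
variables among the first `i` variables. -/
def IsPreCtx (X : PreCtx A) : Prop :=
  ∀ i (hi : i < X.length) (v : A.Var),
    SOccurs v (X[i]'hi).2 → v ∈ (X.take i).map Prod.fst

/-- Substitution pairs sending the variables of `X` to the entries of `f`. -/
def mkSub (X : PreCtx A) (f : List (Expr A)) : List (A.Var × Expr A) :=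
  (X.map Prod.fst).zip f

/-- `Xᵢ[f₁ | x₁, …, f_{i-1} | x_{i-1}]` (0-based: the `i`-th sort of `X`
substituted along the first `i` entries of `f`). -/
noncomputable def subPre (X : PreCtx A) (f : List (Expr A)) (i : ℕ) (hi : i < X.length) :
    SortE A :=
  ((X[i]'hi).2).substL (mkSub (X.take i) (f.take i))

/-- Judgments: context judgments and the four kinds of standard judgments. -/
inductive Judg (A : Alphabet) : Type where
  | ctx (X : PreCtx A)
  | sort (X : PreCtx A) (U : SortE A)
  | term (X : PreCtx A) (u : Expr A) (U : SortE A)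
  | sortEq (X : PreCtx A) (U V : SortE A)
  | termEq (X : PreCtx A) (u v : Expr A) (U : SortE A)

/-- The context of a judgment. -/
def Judg.ctxOf : Judg A → PreCtx A
  | .ctx X => X
  | .sort X _ => X
  | .term X _ _ => X
  | .sortEq X _ _ => X
  | .termEq X _ _ _ => X

/-- The judgment introducing a sort symbol over the context `X`. -/
def introSort (X : PreCtx A) (S : A.SortSym) : Judg A := .sort X ⟨S, ctxVars X⟩

/-- The judgment introducing a term symbol over the context `X`, with sort `U`. -/
def introTerm (X : PreCtx A) (t : A.TermSym) (U : SortE A) : Judg A :=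
  .term X (.app t (ctxVars X)) U

/-- A set of axioms is a pretheory if: no axiom is a context judgment, every
axiom's context is a precontext, every sort symbol has a unique introducing sort
axiom and there are no other sort axioms, and likewise for term symbols. -/
structure IsPretheory (Ax : Set (Judg A)) : Prop where
  no_ctx : ∀ X : PreCtx A, Judg.ctx X ∉ Ax
  wf_ctx : ∀ J ∈ Ax, IsPreCtx J.ctxOf
  sort_intro : ∀ S : A.SortSym, ∃! X : PreCtx A, introSort X S ∈ Ax
  sort_shape : ∀ (X : PreCtx A) (U : SortE A), Judg.sort X U ∈ Ax → U.args = ctxVars X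
  term_intro : ∀ t : A.TermSym, ∃! p : PreCtx A × SortE A, introTerm p.1 t p.2 ∈ Ax
  term_shape : ∀ (X : PreCtx A) (u : Expr A) (U : SortE A), Judg.term X u U ∈ Ax →
      ∃ t : A.TermSym, u = Expr.app t (ctxVars X)

/-- One inference step of the paper's system: `Step Ax D J` holds when `J` is the
conclusion of an instance of one of the sixteen rules all of whose premises
satisfy `D`. -/
inductive Step (Ax : Set (Judg A)) (D : Judg A → Prop) : Judg A → Prop where
  | ctx_nil : Step Ax D (.ctx [])
  | ctx_cons {X : PreCtx A} {U : SortE A} {x : A.Var}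
      (hs : D (.sort X U)) (hfresh : ∀ p ∈ X, p.1 ≠ x)
      (hpre : IsPreCtx (X ++ [(x, U)])) :
      Step Ax D (.ctx (X ++ [(x, U)]))
  | s1 {X : PreCtx A} {U : SortE A} (h : D (.sort X U)) : Step Ax D (.sortEq X U U)
  | s2 {X : PreCtx A} {U V : SortE A} (h : D (.sortEq X U V)) : Step Ax D (.sortEq X V U)
  | s3 {X : PreCtx A} {U V W : SortE A}
      (h1 : D (.sortEq X U V)) (h2 : D (.sortEq X V W)) : Step Ax D (.sortEq X U W)
  | t1 {X : PreCtx A} {u : Expr A} {U : SortE A}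
      (h : D (.term X u U)) : Step Ax D (.termEq X u u U)
  | t2 {X : PreCtx A} {u v : Expr A} {U : SortE A}
      (h : D (.termEq X u v U)) : Step Ax D (.termEq X v u U)
  | t3 {X : PreCtx A} {u v w : Expr A} {U : SortE A}
      (h1 : D (.termEq X u v U)) (h2 : D (.termEq X v w U)) : Step Ax D (.termEq X u w U)
  | seqt {X : PreCtx A} {U U' : SortE A} {u : Expr A}
      (h1 : D (.sortEq X U U')) (h2 : D (.term X u U)) : Step Ax D (.term X u U')
  | seqteq {X : PreCtx A} {U U' : SortE A} {u u' : Expr A}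
      (h1 : D (.sortEq X U U')) (h2 : D (.termEq X u u' U))
      (h3 : D (.term X u U')) (h4 : D (.term X u' U')) : Step Ax D (.termEq X u u' U')
  | var {X : PreCtx A} {i : ℕ} (hi : i < X.length)
      (h : D (.sort X (X[i]'hi).2)) :
      Step Ax D (.term X (.var (X[i]'hi).1) (X[i]'hi).2)
  | sA {X : PreCtx A} {U : SortE A} (hax : Judg.sort X U ∈ Ax) (h : D (.ctx X))
      (hv : ∀ i (hi : i < X.length), D (.term X (.var (X[i]'hi).1) (X[i]'hi).2)) :
      Step Ax D (.sort X U)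
  | tA {X : PreCtx A} {u : Expr A} {U : SortE A} (hax : Judg.term X u U ∈ Ax)
      (h : D (.sort X U))
      (hv : ∀ i (hi : i < X.length), D (.term X (.var (X[i]'hi).1) (X[i]'hi).2)) :
      Step Ax D (.term X u U)
  | seqA {X : PreCtx A} {U U' : SortE A} (hax : Judg.sortEq X U U' ∈ Ax)
      (h1 : D (.sort X U)) (h2 : D (.sort X U')) : Step Ax D (.sortEq X U U')
  | teqA {X : PreCtx A} {u u' : Expr A} {U : SortE A} (hax : Judg.termEq X u u' U ∈ Ax)
      (h1 : D (.term X u U)) (h2 : D (.term X u' U)) : Step Ax D (.termEq X u u' U)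
  | sSub {X : PreCtx A} {S : A.SortSym} (hax : introSort X S ∈ Ax)
      {Y : PreCtx A} (hY : IsPreCtx Y) {f : List (Expr A)} (hlen : f.length = X.length)
      (hJ : D (introSort X S)) (hYc : D (.ctx Y))
      (hargs : ∀ i (hi : i < X.length) (hif : i < f.length),
        D (.term Y (f[i]'hif) (subPre X f i hi))) :
      Step Ax D (.sort Y ⟨S, f⟩)
  | tSub {X : PreCtx A} {t : A.TermSym} {U : SortE A} (hax : introTerm X t U ∈ Ax)
      {Y : PreCtx A} (hY : IsPreCtx Y) {f : List (Expr A)} (hlen : f.length = X.length)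
      (hJ : D (introTerm X t U))
      (hU : D (.sort Y (U.substL (mkSub X f))))
      (hargs : ∀ i (hi : i < X.length) (hif : i < f.length),
        D (.term Y (f[i]'hif) (subPre X f i hi))) :
      Step Ax D (.term Y (.app t f) (U.substL (mkSub X f)))
  | seqSub1 {X : PreCtx A} {U U' : SortE A} (hax : Judg.sortEq X U U' ∈ Ax)
      {Y : PreCtx A} (hY : IsPreCtx Y) {f : List (Expr A)} (hlen : f.length = X.length)
      (hJ : D (.sortEq X U U'))
      (h1 : D (.sort Y (U.substL (mkSub X f)))) (h2 : D (.sort Y (U'.substL (mkSub X f))))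
      (hargs : ∀ i (hi : i < X.length) (hif : i < f.length),
        D (.term Y (f[i]'hif) (subPre X f i hi))) :
      Step Ax D (.sortEq Y (U.substL (mkSub X f)) (U'.substL (mkSub X f)))
  | seqSub2 {X : PreCtx A} {S : A.SortSym} (hax : introSort X S ∈ Ax)
      {Y : PreCtx A} (hY : IsPreCtx Y) {f g : List (Expr A)}
      (hlf : f.length = X.length) (hlg : g.length = X.length)
      (hJ : D (introSort X S))
      (h1 : D (.sort Y ⟨S, f⟩)) (h2 : D (.sort Y ⟨S, g⟩))
      (hargs : ∀ i (hi : i < X.length) (hif : i < f.length) (hig : i < g.length),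
        D (.termEq Y (f[i]'hif) (g[i]'hig) (subPre X f i hi))) :
      Step Ax D (.sortEq Y ⟨S, f⟩ ⟨S, g⟩)
  | teqSub1 {X : PreCtx A} {u u' : Expr A} {U : SortE A}
      (hax : Judg.termEq X u u' U ∈ Ax)
      {Y : PreCtx A} (hY : IsPreCtx Y) {f : List (Expr A)} (hlen : f.length = X.length)
      (hJ : D (.termEq X u u' U))
      (h1 : D (.term Y (u.substL (mkSub X f)) (U.substL (mkSub X f))))
      (h2 : D (.term Y (u'.substL (mkSub X f)) (U.substL (mkSub X f))))
      (hargs : ∀ i (hi : i < X.length) (hif : i < f.length),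
        D (.term Y (f[i]'hif) (subPre X f i hi))) :
      Step Ax D (.termEq Y (u.substL (mkSub X f)) (u'.substL (mkSub X f))
        (U.substL (mkSub X f)))
  | teqSub2 {X : PreCtx A} {t : A.TermSym} {U : SortE A} (hax : introTerm X t U ∈ Ax)
      {Y : PreCtx A} (hY : IsPreCtx Y) {f g : List (Expr A)}
      (hlf : f.length = X.length) (hlg : g.length = X.length)
      (hJ : D (introTerm X t U))
      (h1 : D (.term Y (.app t f) (U.substL (mkSub X f))))
      (h2 : D (.term Y (.app t g) (U.substL (mkSub X f))))
      (hargs : ∀ i (hi : i < X.length) (hif : i < f.length) (hig : i < g.length),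
        D (.termEq Y (f[i]'hif) (g[i]'hig) (subPre X f i hi))) :
      Step Ax D (.termEq Y (.app t f) (.app t g) (U.substL (mkSub X f)))

/-- `DerAt Ax n J`: `J` is the conclusion of an inference step in the `n`-th stage
`𝒟ₙ` of the recursive construction of the derivable judgments. -/
def DerAt (Ax : Set (Judg A)) : ℕ → Judg A → Prop
  | 0, _ => False
  | n + 1, J => DerAt Ax n J ∨ Step Ax (DerAt Ax n) J

/-- A judgment is derivable if it is the conclusion of a step of some stage. -/
def Derivable (Ax : Set (Judg A)) (J : Judg A) : Prop := ∃ n, DerAt Ax n J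

/-- The height of a (derivable) judgment: the least stage at which it appears. -/
noncomputable def ht (Ax : Set (Judg A)) (J : Judg A) : ℕ := sInf {n | DerAt Ax n J}

/-- The height of a context: `0` for the empty context, and the height of
`∂X ⊢ Xₙ sort` otherwise. -/
noncomputable def htCtx (Ax : Set (Judg A)) (X : PreCtx A) : ℕ :=
  match X with
  | [] => 0
  | p :: X' =>
      ht Ax (.sort ((p :: X').dropLast) (((p :: X').getLast (List.cons_ne_nil p X')).2))

/-- A generalized algebraic theory: a pretheory all of whose axioms are derivable. -/
def IsGAT (Ax : Set (Judg A)) : Prop := IsPretheory Ax ∧ ∀ J ∈ Ax, Derivable Ax J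

/-- The partial term judgment `X ⊢ u term` is derivable. -/
def DerTerm (Ax : Set (Judg A)) (X : PreCtx A) (u : Expr A) : Prop :=
  ∃ U, Derivable Ax (.term X u U)

/-- The partial term equality judgment `X ⊢ u ≡ v term` is derivable. -/
def DerTermEq (Ax : Set (Judg A)) (X : PreCtx A) (u v : Expr A) : Prop :=
  ∃ U, Derivable Ax (.termEq X u v U)

/-- Height of a derivable partial term judgment: the minimum of the heights of
`X ⊢ u : U` over all `U`. -/
noncomputable def htTerm (Ax : Set (Judg A)) (X : PreCtx A) (u : Expr A) : ℕ :=
  sInf {n | ∃ U, DerAt Ax n (.term X u U)}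

/-- `f` is a context morphism from `X` to `Y`. -/
def IsMor (Ax : Set (Judg A)) (X Y : PreCtx A) (f : List (Expr A)) : Prop :=
  Derivable Ax (.ctx X) ∧ Derivable Ax (.ctx Y) ∧ f.length = Y.length ∧
  ∀ i (hi : i < Y.length) (hif : i < f.length),
    Derivable Ax (.term X (f[i]'hif) (subPre Y f i hi))

/-- The morphism equality `f ≡ g : X → Y` is derivable. -/
def MorEq (Ax : Set (Judg A)) (X Y : PreCtx A) (f g : List (Expr A)) : Prop :=
  IsMor Ax X Y f ∧ IsMor Ax X Y g ∧
  ∀ i (hi : i < Y.length) (hif : i < f.length) (hig : i < g.length),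
    Derivable Ax (.termEq X (f[i]'hif) (g[i]'hig) (subPre Y f i hi))

/-- The context equality `X ≡ Y ctx` is derivable. -/
def CtxEq (Ax : Set (Judg A)) (X Y : PreCtx A) : Prop :=
  X.length = Y.length ∧ Derivable Ax (.ctx X) ∧ Derivable Ax (.ctx Y) ∧
  ∀ i (hX : i < X.length) (hY : i < Y.length),
    Derivable Ax (.sortEq (X.take i) (X[i]'hX).2
      (((Y[i]'hY).2).substL (mkSub (Y.take i) (ctxVars (X.take i)))))

/-- Height of a context morphism. -/
noncomputable def htMor (Ax : Set (Judg A)) (X Y : PreCtx A) (f : List (Expr A)) : ℕ :=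
  max (htCtx Ax X) (max (htCtx Ax Y)
    ((Finset.range Y.length).sup fun i =>
      if h : i < Y.length ∧ i < f.length then
        ht Ax (.term X (f[i]'h.2) (subPre Y f i h.1))
      else 0))

/-- Height of a morphism equality. -/
noncomputable def htMorEq (Ax : Set (Judg A)) (X Y : PreCtx A) (f g : List (Expr A)) : ℕ :=
  max (htMor Ax X Y f) (max (htMor Ax X Y g)
    ((Finset.range Y.length).sup fun i =>
      if h : i < Y.length ∧ i < f.length ∧ i < g.length then
        ht Ax (.termEq X (f[i]'h.2.1) (g[i]'h.2.2) (subPre Y f i h.1))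
      else 0))

/-- The composite `g ∘ f` of tuples of term expressions, where `f : X → Y` and
`g : Y → Z`: the `i`-th entry is `gᵢ[f]`. -/
noncomputable def compMor (Y : PreCtx A) (f g : List (Expr A)) : List (Expr A) :=
  g.map fun e => e.substL (mkSub Y f)

/-- The canonical sort `𝒮(u)` of a term in a context (as a relation). -/
inductive CanonSort (Ax : Set (Judg A)) (X : PreCtx A) : Expr A → SortE A → Prop where
  | var {i : ℕ} (hi : i < X.length) : CanonSort Ax X (.var (X[i]'hi).1) (X[i]'hi).2
  | app {t : A.TermSym} {f : List (Expr A)} {Xa : PreCtx A} {V : SortE A}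
      (hax : introTerm Xa t V ∈ Ax) :
      CanonSort Ax X (.app t f) (V.substL (mkSub Xa f))


/-! ## Auxiliary development -/

section Aux

variable {A : Alphabet}

/-- Strong induction principle for `Expr`. -/
lemma Expr.ind' {P : Expr A → Prop} (hv : ∀ x, P (.var x))
    (ha : ∀ t es, (∀ e ∈ es, P e) → P (.app t es)) : ∀ e, P e := by
  intro e
  induction e using Expr.subst.induct with
  | case1 x => exact hv x
  | case2 t es ih => exact ha t es fun e he => ih ⟨e, he⟩

@[simp] lemma Expr.subst_var (σ : A.Var → Expr A) (x : A.Var) :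
    (Expr.var x).subst σ = σ x := by rw [Expr.subst]

@[simp] lemma Expr.subst_app (σ : A.Var → Expr A) (t : A.TermSym) (es : List (Expr A)) :
    (Expr.app t es).subst σ = .app t (es.map (Expr.subst σ)) := by
  rw [Expr.subst]
  congr 1
  rw [List.map_congr_left fun (e : {x // x ∈ es}) _ => rfl]
  exact (List.attach_map_val (l := es)).symm ▸ rfl

lemma Expr.subst_congr {σ τ : A.Var → Expr A} :
    ∀ e : Expr A, (∀ z, Occurs z e → σ z = τ z) → e.subst σ = e.subst τ := by
  refine Expr.ind' (fun x h => ?_) (fun t es ih h => ?_)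
  · simpa using h x .var
  · simp only [Expr.subst_app]
    congr 1
    exact List.map_congr_left fun e he => ih e he fun z hz => h z (.app he hz)

lemma Expr.subst_subst (σ τ : A.Var → Expr A) :
    ∀ e : Expr A, (e.subst σ).subst τ = e.subst fun z => (σ z).subst τ := by
  refine Expr.ind' (fun x => by rw [Expr.subst_var, Expr.subst_var]) (fun t es ih => ?_)
  simp only [Expr.subst_app, List.map_map]
  congr 1
  exact List.map_congr_left fun e he => ih e he

@[simp] lemma SortE.substL_mk (S : A.SortSym) (args : List (Expr A))
    (ps : List (A.Var × Expr A)) :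
    (SortE.mk S args).substL ps = ⟨S, args.map (·.substL ps)⟩ := rfl

lemma SortE.subst_congr {σ τ : A.Var → Expr A} (U : SortE A)
    (h : ∀ z, SOccurs z U → σ z = τ z) : U.subst σ = U.subst τ := by
  obtain ⟨S, args⟩ := U
  simp only [SortE.subst, SortE.mk.injEq, true_and]
  exact List.map_congr_left fun e he => Expr.subst_congr e fun z hz => h z ⟨e, he, hz⟩

/-- Keys of `mkSub`. -/
lemma mkSub_eq (X : PreCtx A) (f : List (Expr A)) :
    mkSub X f = (X.map Prod.fst).zip f := rfl

/-- Lookup at the `i`-th key of a zip with nodup keys. -/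
lemma lookupV_zip_getElem {ks : List A.Var} {us : List (Expr A)} (hnd : ks.Nodup)
    {i : ℕ} (hik : i < ks.length) (hiu : i < us.length) :
    lookupV (ks.zip us) (ks[i]'hik) = us[i]'hiu := by
  induction ks generalizing us i with
  | nil => simp at hik
  | cons k ks ih =>
    obtain ⟨u, us, rfl⟩ : ∃ u us', us = u :: us' := by
      cases us with
      | nil => simp at hiu
      | cons u us => exact ⟨u, us, rfl⟩
    cases i with
    | zero => simp [lookupV]
    | succ i =>
      have hk : k ≠ ks[i]'(by simpa using hik) := by
        intro h
        exact (List.nodup_cons.mp hnd).1 (h ▸ List.getElem_mem _)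
      simp only [List.zip_cons_cons, lookupV, List.getElem_cons_succ]
      rw [if_neg hk]
      exact ih (List.nodup_cons.mp hnd).2 _ (by simpa using hiu)

/-- Lookup in a truncated zip agrees with lookup in the full zip on the truncated keys. -/
lemma lookupV_take {ks : List A.Var} {us : List (Expr A)} {i : ℕ} {z : A.Var}
    (hz : z ∈ ks.take i) :
    lookupV ((ks.take i).zip (us.take i)) z = lookupV (ks.zip us) z := by
  induction ks generalizing us i with
  | nil => simp at hz
  | cons k ks ih =>
    cases i with
    | zero => simp at hz
    | succ i =>
      cases us with
      | nil => simp
      | cons u us =>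
        simp only [List.take_succ_cons, List.zip_cons_cons, lookupV] at *
        by_cases hk : k = z
        · simp [hk]
        · rw [if_neg hk, if_neg hk]
          exact ih ((List.mem_cons.mp hz).resolve_left fun h => hk h.symm)

/-- Lookup in a zip with mapped values, for keys in range. -/
lemma lookupV_zip_map {ks : List A.Var} {us : List (Expr A)} (σ : A.Var → Expr A)
    {z : A.Var} (hz : z ∈ ks) (hlen : ks.length ≤ us.length) :
    lookupV (ks.zip (us.map (·.subst σ))) z = (lookupV (ks.zip us) z).subst σ := by
  induction ks generalizing us with
  | nil => simp at hz
  | cons k ks ih =>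
    cases us with
    | nil => simp at hlen
    | cons u us =>
      simp only [List.map_cons, List.zip_cons_cons, lookupV]
      by_cases hk : k = z
      · simp [hk]
      · rw [if_neg hk, if_neg hk]
        exact ih ((List.mem_cons.mp hz).resolve_left fun h => hk h.symm) (by simpa using hlen)

/-- Scoping conditions. -/
def TermScoped (X : PreCtx A) (u : Expr A) : Prop :=
  ∀ v, Occurs v u → v ∈ X.map Prod.fst

def SortScoped (X : PreCtx A) (U : SortE A) : Prop :=
  ∀ v, SOccurs v U → v ∈ X.map Prod.fst

/-- E1: for a scoped context, substituting the `i`-th sort along the full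
substitution agrees with `subPre`. -/
lemma substL_eq_subPre {Y : PreCtx A} (hY : IsPreCtx Y) {i : ℕ} (hi : i < Y.length)
    (f : List (Expr A)) :
    ((Y[i]'hi).2).substL (mkSub Y f) = subPre Y f i hi := by
  unfold subPre SortE.substL
  refine (SortE.subst_congr _ fun z hz => ?_).symm
  have hz' : z ∈ (Y.take i).map Prod.fst := hY i hi z hz
  have hz'' : z ∈ (Y.map Prod.fst).take i := by rwa [List.map_take] at hz'
  rw [mkSub_eq, mkSub_eq, List.map_take, lookupV_take hz'']

/-- E2 (expr): composing substitutions along `mkSub`. -/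
lemma Expr.substL_substL {X : PreCtx A} {g : List (Expr A)} (hlen : X.length ≤ g.length)
    {u : Expr A} (hu : TermScoped X u) (ps : List (A.Var × Expr A)) :
    (u.substL (mkSub X g)).substL ps = u.substL (mkSub X (g.map (·.substL ps))) := by
  unfold Expr.substL
  rw [Expr.subst_subst]
  refine Expr.subst_congr u fun z hz => ?_
  rw [mkSub_eq, mkSub_eq]
  exact (lookupV_zip_map (lookupV ps) (hu z hz) (by simpa using hlen)).symm

/-- E2 (sort): composing substitutions along `mkSub`. -/
lemma SortE.substL_substL {X : PreCtx A} {g : List (Expr A)} (hlen : X.length ≤ g.length)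
    {U : SortE A} (hU : SortScoped X U) (ps : List (A.Var × Expr A)) :
    (U.substL (mkSub X g)).substL ps = U.substL (mkSub X (g.map (·.substL ps))) := by
  obtain ⟨S, args⟩ := U
  simp only [SortE.substL_mk, List.map_map, SortE.mk.injEq, true_and]
  exact List.map_congr_left fun e he =>
    Expr.substL_substL hlen (fun z hz => hU z ⟨e, he, hz⟩) ps

/-- E3: `subPre` commutes with composition of morphisms. -/
lemma subPre_comp {Xa : PreCtx A} (hXa : IsPreCtx Xa) {g : List (Expr A)}
    (hlen : Xa.length ≤ g.length) {i : ℕ} (hi : i < Xa.length)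
    (ps : List (A.Var × Expr A)) :
    (subPre Xa g i hi).substL ps = subPre Xa (g.map (·.substL ps)) i hi := by
  unfold subPre
  rw [← List.map_take]
  refine (SortE.substL_substL (X := Xa.take i) (g := g.take i) ?_ ?_ ps)
  · simp only [List.length_take]
    omega
  · intro z hz
    have := hXa i hi z hz
    rwa [List.map_take] at this ⊢

/-- E4: substituting the generic sort-symbol arguments gives `f`. -/
lemma ctxVars_subst {Y : PreCtx A} (hnd : (Y.map Prod.fst).Nodup)
    {f : List (Expr A)} (hlen : f.length = Y.length) :
    (ctxVars Y).map (·.substL (mkSub Y f)) = f := by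
  refine List.ext_getElem (by simp [ctxVars, hlen]) fun i h1 h2 => ?_
  have hiY : i < Y.length := by simpa [ctxVars] using h1
  simp only [List.getElem_map, ctxVars, Expr.substL, Expr.subst_var]
  have h := lookupV_zip_getElem (us := f) hnd (i := i) (by simpa using hiY) (by omega)
  simpa [mkSub] using h

@[simp] lemma Expr.substL_var (x : A.Var) (ps : List (A.Var × Expr A)) :
    (Expr.var x).substL ps = lookupV ps x := by
  unfold Expr.substL; rw [Expr.subst_var]

@[simp] lemma Expr.substL_app (t : A.TermSym) (es : List (Expr A))
    (ps : List (A.Var × Expr A)) :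
    (Expr.app t es).substL ps = .app t (es.map (·.substL ps)) := by
  unfold Expr.substL; rw [Expr.subst_app]

lemma derAt_mono {Ax : Set (Judg A)} {J : Judg A} :
    ∀ {m n : ℕ}, m ≤ n → DerAt Ax m J → DerAt Ax n J := by
  intro m n
  induction n with
  | zero => intro h hm; rwa [Nat.le_zero.mp h] at hm
  | succ n ih =>
    intro h hm
    rcases Nat.lt_or_ge m (n + 1) with h' | h'
    · exact Or.inl (ih (by omega) hm)
    · have : m = n + 1 := by omega
      rwa [this] at hm

lemma stage_family {Ax : Set (Judg A)} {L : ℕ} {F : (i : ℕ) → i < L → Judg A}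
    (h : ∀ i hi, Derivable Ax (F i hi)) : ∃ N, ∀ i hi, DerAt Ax N (F i hi) := by
  induction L with
  | zero => exact ⟨0, fun i hi => absurd hi (by omega)⟩
  | succ L ih =>
    obtain ⟨N1, h1⟩ := ih (F := fun i hi => F i (by omega)) (fun i hi => h i (by omega))
    obtain ⟨N2, h2⟩ := h L (Nat.lt_succ_self L)
    refine ⟨max N1 N2, fun i hi => ?_⟩
    rcases Nat.lt_or_ge i L with h' | h'
    · exact derAt_mono (le_max_left _ _) (h1 i h')
    · have : i = L := by omega
      subst this
      exact derAt_mono (le_max_right _ _) h2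

/-- Well-scoped contexts: the precontext condition plus distinct variables. -/
def CtxOK (X : PreCtx A) : Prop := IsPreCtx X ∧ (X.map Prod.fst).Nodup

/-- Well-scopedness of a judgment. -/
def Scoped : Judg A → Prop
  | .ctx X => CtxOK X
  | .sort X U => CtxOK X ∧ SortScoped X U
  | .term X u U => CtxOK X ∧ TermScoped X u ∧ SortScoped X U
  | .sortEq X U V => CtxOK X ∧ SortScoped X U ∧ SortScoped X V
  | .termEq X u v U => CtxOK X ∧ TermScoped X u ∧ TermScoped X v ∧ SortScoped X U

lemma occurs_var_iff {v x : A.Var} : Occurs v (Expr.var x) ↔ v = x :=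
  ⟨fun h => by cases h; rfl, fun h => h ▸ .var⟩

lemma occurs_app_iff {v : A.Var} {t : A.TermSym} {es : List (Expr A)} :
    Occurs v (Expr.app t es) ↔ ∃ e ∈ es, Occurs v e := by
  constructor
  · intro h
    cases h with
    | app he ho => exact ⟨_, he, ho⟩
  · rintro ⟨e, he, ho⟩; exact .app he ho

lemma termScoped_ctxVars_app (X : PreCtx A) (t : A.TermSym) :
    TermScoped X (.app t (ctxVars X)) := by
  intro v hv
  obtain ⟨e, he, ho⟩ := occurs_app_iff.mp hv
  obtain ⟨p, hp, rfl⟩ := List.mem_map.mp he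
  cases occurs_var_iff.mp ho
  exact List.mem_map.mpr ⟨p, hp, rfl⟩

lemma sortScoped_ctxVars (X : PreCtx A) (S : A.SortSym) :
    SortScoped X ⟨S, ctxVars X⟩ := by
  rintro v ⟨e, he, ho⟩
  obtain ⟨p, hp, rfl⟩ := List.mem_map.mp he
  cases occurs_var_iff.mp ho
  exact List.mem_map.mpr ⟨p, hp, rfl⟩

/-- Sanity: every derivable judgment is well-scoped. -/
lemma sanity {Ax : Set (Judg A)} (hAx : IsPretheory Ax) :
    ∀ n (J : Judg A), DerAt Ax n J → Scoped J := by
  intro n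
  induction n with
  | zero => intro J h; exact h.elim
  | succ n ih =>
    rintro J (h | h)
    · exact ih J h
    cases h with
    | ctx_nil => exact ⟨fun i hi => absurd hi (by simp), by simp⟩
    | @ctx_cons X U x hs hfresh hpre =>
      obtain ⟨⟨_, hnd⟩, _⟩ := ih _ hs
      refine ⟨hpre, ?_⟩
      rw [List.map_append]
      refine List.Nodup.append hnd (by simp) ?_
      intro a ha ha'
      obtain ⟨p, hp, rfl⟩ := List.mem_map.mp ha
      simp only [List.map_cons, List.map_nil, List.mem_singleton] at ha'
      exact hfresh p hp ha'
    | s1 h => obtain ⟨c, hU⟩ := ih _ h; exact ⟨c, hU, hU⟩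
    | s2 h => obtain ⟨c, h1, h2⟩ := ih _ h; exact ⟨c, h2, h1⟩
    | s3 h1 h2 => exact ⟨(ih _ h1).1, (ih _ h1).2.1, (ih _ h2).2.2⟩
    | t1 h => obtain ⟨c, hu, hU⟩ := ih _ h; exact ⟨c, hu, hu, hU⟩
    | t2 h => obtain ⟨c, h1, h2, hU⟩ := ih _ h; exact ⟨c, h2, h1, hU⟩
    | t3 h1 h2 => exact ⟨(ih _ h1).1, (ih _ h1).2.1, (ih _ h2).2.2.1, (ih _ h1).2.2.2⟩
    | seqt h1 h2 => exact ⟨(ih _ h2).1, (ih _ h2).2.1, (ih _ h1).2.2⟩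
    | seqteq h1 h2 h3 h4 =>
      exact ⟨(ih _ h3).1, (ih _ h3).2.1, (ih _ h4).2.1, (ih _ h3).2.2⟩
    | @var X i hi h =>
      obtain ⟨c, hU⟩ := ih _ h
      refine ⟨c, ?_, hU⟩
      intro v hv
      cases occurs_var_iff.mp hv
      exact List.mem_map.mpr ⟨X[i]'hi, List.getElem_mem _, rfl⟩
    | @sA X U hax h hv =>
      refine ⟨ih _ h, ?_⟩
      have hsh := hAx.sort_shape _ _ hax
      obtain ⟨S, args⟩ := U
      cases hsh
      exact sortScoped_ctxVars X S
    | @tA X u U hax h hv =>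
      obtain ⟨c, hU⟩ := ih _ h
      obtain ⟨t, rfl⟩ := hAx.term_shape _ _ _ hax
      exact ⟨c, termScoped_ctxVars_app X t, hU⟩
    | seqA hax h1 h2 => exact ⟨(ih _ h1).1, (ih _ h1).2, (ih _ h2).2⟩
    | teqA hax h1 h2 => exact ⟨(ih _ h1).1, (ih _ h1).2.1, (ih _ h2).2.1, (ih _ h1).2.2⟩
    | @sSub X S hax Y hY f hlen hJ hYc hargs =>
      refine ⟨ih _ hYc, ?_⟩
      rintro v ⟨e, he, ho⟩
      obtain ⟨i, hif, rfl⟩ := List.mem_iff_getElem.mp he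
      have hif2 : i < f.length := by simpa using hif
      exact (ih _ (hargs i (by omega) hif2)).2.1 v ho
    | @tSub X t U hax Y hY f hlen hJ hU hargs =>
      obtain ⟨c, hS⟩ := ih _ hU
      refine ⟨c, ?_, hS⟩
      intro v hv
      obtain ⟨e, he, ho⟩ := occurs_app_iff.mp hv
      obtain ⟨i, hif, rfl⟩ := List.mem_iff_getElem.mp he
      exact (ih _ (hargs i (by omega) hif)).2.1 v ho
    | seqSub1 hax hY hlen hJ h1 h2 hargs =>
      exact ⟨(ih _ h1).1, (ih _ h1).2, (ih _ h2).2⟩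
    | seqSub2 hax hY hlf hlg hJ h1 h2 hargs =>
      exact ⟨(ih _ h1).1, (ih _ h1).2, (ih _ h2).2⟩
    | teqSub1 hax hY hlen hJ h1 h2 hargs =>
      exact ⟨(ih _ h1).1, (ih _ h1).2.1, (ih _ h2).2.1, (ih _ h1).2.2⟩
    | teqSub2 hax hY hlf hlg hJ h1 h2 hargs =>
      exact ⟨(ih _ h1).1, (ih _ h1).2.1, (ih _ h2).2.1, (ih _ h1).2.2⟩

/-- The substitution of a (non-context) judgment along a morphism into `X`. -/
noncomputable def SubJ (X : PreCtx A) (f : List (Expr A)) : Judg A → Judg A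
  | .ctx _ => .ctx []
  | .sort Y U => .sort X (U.substL (mkSub Y f))
  | .term Y u U => .term X (u.substL (mkSub Y f)) (U.substL (mkSub Y f))
  | .sortEq Y U V => .sortEq X (U.substL (mkSub Y f)) (V.substL (mkSub Y f))
  | .termEq Y u v U =>
      .termEq X (u.substL (mkSub Y f)) (v.substL (mkSub Y f)) (U.substL (mkSub Y f))

lemma mor_ctxok {Ax : Set (Judg A)} (hAx : IsPretheory Ax) {X Y : PreCtx A}
    {f : List (Expr A)} (hm : IsMor Ax X Y f) : CtxOK X := by
  obtain ⟨⟨N, h⟩, _⟩ := hm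
  exact sanity hAx N _ h

lemma mor_stage {Ax : Set (Judg A)} {X Y : PreCtx A} {f : List (Expr A)}
    (hm : IsMor Ax X Y f) :
    ∃ N, DerAt Ax N (.ctx X) ∧
      ∀ i (hi : i < Y.length) (hif : i < f.length),
        DerAt Ax N (.term X (f[i]'hif) (subPre Y f i hi)) := by
  obtain ⟨⟨N0, h0⟩, _, hlen, hargs⟩ := hm
  obtain ⟨N1, h1⟩ := stage_family (L := Y.length)
    (F := fun i hi => .term X (f[i]'(by omega)) (subPre Y f i hi))
    (fun i hi => hargs i hi (by omega))
  exact ⟨max N0 N1, derAt_mono (le_max_left _ _) h0,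
    fun i hi hif => derAt_mono (le_max_right _ _) (h1 i hi)⟩

lemma comp_args {Ax : Set (Judg A)} {Xa Y X : PreCtx A} (hXa : IsPreCtx Xa)
    {g f : List (Expr A)} (hlen : g.length = Xa.length)
    (h : ∀ i (hi : i < Xa.length) (hig : i < g.length),
      Derivable Ax (.term X ((g[i]'hig).substL (mkSub Y f))
        ((subPre Xa g i hi).substL (mkSub Y f)))) :
    ∃ N, ∀ i (hi : i < Xa.length) (hig : i < (compMor Y f g).length),
      DerAt Ax N (.term X ((compMor Y f g)[i]'hig)
        (subPre Xa (compMor Y f g) i hi)) := by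
  obtain ⟨N, hN⟩ := stage_family (L := Xa.length)
    (F := fun i hi => .term X ((compMor Y f g)[i]'(by simp [compMor]; omega))
      (subPre Xa (compMor Y f g) i hi))
    (fun i hi => by
      have h' := h i hi (by omega)
      rw [subPre_comp hXa (by omega) hi] at h'
      show Derivable Ax (.term X ((compMor Y f g)[i]'(by simp [compMor]; omega))
        (subPre Xa (compMor Y f g) i hi))
      have e : (compMor Y f g)[i]'(by simp [compMor]; omega)
          = (g[i]'(by omega)).substL (mkSub Y f) := by
        simp [compMor]
      rw [e]
      exact h')
  exact ⟨N, fun i hi hig => hN i hi⟩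

lemma comp_args_eq {Ax : Set (Judg A)} {Xa Y X : PreCtx A} (hXa : IsPreCtx Xa)
    {g1 g2 f : List (Expr A)} (hl1 : g1.length = Xa.length)
    (h : ∀ i (hi : i < Xa.length) (h1 : i < g1.length) (h2 : i < g2.length),
      Derivable Ax (.termEq X ((g1[i]'h1).substL (mkSub Y f))
        ((g2[i]'h2).substL (mkSub Y f))
        ((subPre Xa g1 i hi).substL (mkSub Y f))))
    (hl2 : g2.length = Xa.length) :
    ∃ N, ∀ i (hi : i < Xa.length) (h1 : i < (compMor Y f g1).length)
      (h2 : i < (compMor Y f g2).length),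
      DerAt Ax N (.termEq X ((compMor Y f g1)[i]'h1) ((compMor Y f g2)[i]'h2)
        (subPre Xa (compMor Y f g1) i hi)) := by
  obtain ⟨N, hN⟩ := stage_family (L := Xa.length)
    (F := fun i hi => .termEq X ((compMor Y f g1)[i]'(by simp [compMor]; omega))
      ((compMor Y f g2)[i]'(by simp [compMor]; omega))
      (subPre Xa (compMor Y f g1) i hi))
    (fun i hi => by
      have h' := h i hi (by omega) (by omega)
      rw [subPre_comp hXa (by omega) hi] at h'
      show Derivable Ax (.termEq X ((compMor Y f g1)[i]'(by simp [compMor]; omega))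
        ((compMor Y f g2)[i]'(by simp [compMor]; omega))
        (subPre Xa (compMor Y f g1) i hi))
      have e1 : (compMor Y f g1)[i]'(by simp [compMor]; omega)
          = (g1[i]'(by omega)).substL (mkSub Y f) := by simp [compMor]
      have e2 : (compMor Y f g2)[i]'(by simp [compMor]; omega)
          = (g2[i]'(by omega)).substL (mkSub Y f) := by simp [compMor]
      rw [e1, e2]
      exact h')
  exact ⟨N, fun i hi h1 h2 => hN i hi⟩

/-- Substitution theorem: derivable judgments are closed under substitution
along a context morphism. -/
theorem subst_derivable {Ax : Set (Judg A)} (hAx : IsPretheory Ax) :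
    ∀ n (J : Judg A), DerAt Ax n J → ∀ (X : PreCtx A) (f : List (Expr A)),
      IsMor Ax X J.ctxOf f → Derivable Ax (SubJ X f J) := by
  intro n
  induction n with
  | zero => intro J h; exact h.elim
  | succ n ih =>
    rintro J (h | h) X f hm
    · exact ih J h X f hm
    have hself : DerAt Ax (n + 1) J := Or.inr h
    cases h with
    | ctx_nil => exact ⟨1, Or.inr Step.ctx_nil⟩
    | ctx_cons hs hfresh hpre => exact ⟨1, Or.inr Step.ctx_nil⟩
    | s1 h =>
      obtain ⟨N, hN⟩ := ih _ h X f hm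
      exact ⟨N + 1, Or.inr (Step.s1 hN)⟩
    | s2 h =>
      obtain ⟨N, hN⟩ := ih _ h X f hm
      exact ⟨N + 1, Or.inr (Step.s2 hN)⟩
    | s3 h1 h2 =>
      obtain ⟨N1, h1'⟩ := ih _ h1 X f hm
      obtain ⟨N2, h2'⟩ := ih _ h2 X f hm
      exact ⟨max N1 N2 + 1, Or.inr (Step.s3 (derAt_mono (le_max_left _ _) h1')
        (derAt_mono (le_max_right _ _) h2'))⟩
    | t1 h =>
      obtain ⟨N, hN⟩ := ih _ h X f hm
      exact ⟨N + 1, Or.inr (Step.t1 hN)⟩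
    | t2 h =>
      obtain ⟨N, hN⟩ := ih _ h X f hm
      exact ⟨N + 1, Or.inr (Step.t2 hN)⟩
    | t3 h1 h2 =>
      obtain ⟨N1, h1'⟩ := ih _ h1 X f hm
      obtain ⟨N2, h2'⟩ := ih _ h2 X f hm
      exact ⟨max N1 N2 + 1, Or.inr (Step.t3 (derAt_mono (le_max_left _ _) h1')
        (derAt_mono (le_max_right _ _) h2'))⟩
    | seqt h1 h2 =>
      obtain ⟨N1, h1'⟩ := ih _ h1 X f hm
      obtain ⟨N2, h2'⟩ := ih _ h2 X f hm
      exact ⟨max N1 N2 + 1, Or.inr (Step.seqt (derAt_mono (le_max_left _ _) h1')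
        (derAt_mono (le_max_right _ _) h2'))⟩
    | seqteq h1 h2 h3 h4 =>
      obtain ⟨N1, h1'⟩ := ih _ h1 X f hm
      obtain ⟨N2, h2'⟩ := ih _ h2 X f hm
      obtain ⟨N3, h3'⟩ := ih _ h3 X f hm
      obtain ⟨N4, h4'⟩ := ih _ h4 X f hm
      refine ⟨max (max N1 N2) (max N3 N4) + 1, Or.inr (Step.seqteq
        (derAt_mono ((le_max_left N1 N2).trans (le_max_left _ _)) h1')
        (derAt_mono ((le_max_right N1 N2).trans (le_max_left _ _)) h2')
        (derAt_mono ((le_max_left N3 N4).trans (le_max_right _ _)) h3')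
        (derAt_mono ((le_max_right N3 N4).trans (le_max_right _ _)) h4'))⟩
    | @var X0 i hi h =>
      have hok : CtxOK X0 := (sanity hAx n _ h).1
      obtain ⟨hmX, hmY, hmlen, hmargs⟩ := hm
      have hmlen' : f.length = X0.length := hmlen
      have hif : i < f.length := by omega
      have e1 : lookupV (mkSub X0 f) ((X0[i]'hi).1) = f[i]'hif := by
        have := lookupV_zip_getElem (us := f) hok.2 (i := i) (by simpa using hi) hif
        simpa [mkSub] using this
      show Derivable Ax (.term X ((Expr.var (X0[i]'hi).1).substL (mkSub X0 f))
        (((X0[i]'hi).2).substL (mkSub X0 f)))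
      rw [Expr.substL_var, e1, substL_eq_subPre hok.1 hi f]
      exact hmargs i hi hif
    | @sA X0 U hax h hv =>
      have hok : CtxOK X0 := sanity hAx n _ h
      have hXok : CtxOK X := mor_ctxok hAx hm
      obtain ⟨S, args⟩ := U
      obtain rfl : args = ctxVars X0 := hAx.sort_shape _ _ hax
      obtain ⟨N1, hctx, hargsN⟩ := mor_stage hm
      refine ⟨max N1 (n + 1) + 1, Or.inr ?_⟩
      show Step Ax (DerAt Ax (max N1 (n + 1)))
        (.sort X ((⟨S, ctxVars X0⟩ : SortE A).substL (mkSub X0 f)))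
      have e : (⟨S, ctxVars X0⟩ : SortE A).substL (mkSub X0 f) = ⟨S, f⟩ := by
        rw [SortE.substL_mk, ctxVars_subst hok.2 hm.2.2.1]
      rw [e]
      exact Step.sSub hax hXok.1 hm.2.2.1
        (derAt_mono (le_max_right _ _) hself)
        (derAt_mono (le_max_left _ _) hctx)
        (fun i hi hif => derAt_mono (le_max_left _ _) (hargsN i hi hif))
    | @tA X0 u U hax h hv =>
      have hok : CtxOK X0 := (sanity hAx n _ h).1
      have hXok : CtxOK X := mor_ctxok hAx hm
      obtain ⟨t, rfl⟩ := hAx.term_shape _ _ _ hax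
      obtain ⟨N1, hctx, hargsN⟩ := mor_stage hm
      obtain ⟨N2, hU'⟩ := ih _ h X f hm
      refine ⟨max (max N1 N2) (n + 1) + 1, Or.inr ?_⟩
      show Step Ax (DerAt Ax (max (max N1 N2) (n + 1)))
        (.term X ((Expr.app t (ctxVars X0)).substL (mkSub X0 f))
          (U.substL (mkSub X0 f)))
      have e : (Expr.app t (ctxVars X0)).substL (mkSub X0 f) = .app t f := by
        rw [Expr.substL_app, ctxVars_subst hok.2 hm.2.2.1]
      rw [e]
      exact Step.tSub hax hXok.1 hm.2.2.1
        (derAt_mono (le_max_right _ _) hself)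
        (derAt_mono ((le_max_right N1 N2).trans (le_max_left _ _)) hU')
        (fun i hi hif =>
          derAt_mono ((le_max_left N1 N2).trans (le_max_left _ _)) (hargsN i hi hif))
    | @seqA X0 U U' hax h1 h2 =>
      have hXok : CtxOK X := mor_ctxok hAx hm
      obtain ⟨N0, hctx, hargsN⟩ := mor_stage hm
      obtain ⟨N1, h1'⟩ := ih _ h1 X f hm
      obtain ⟨N2, h2'⟩ := ih _ h2 X f hm
      refine ⟨max (max N0 (max N1 N2)) (n + 1) + 1, Or.inr
        (Step.seqSub1 hax hXok.1 hm.2.2.1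
          (derAt_mono (le_max_right _ _) hself)
          (derAt_mono ((le_max_left N1 N2).trans ((le_max_right N0 _).trans
            (le_max_left _ _))) h1')
          (derAt_mono ((le_max_right N1 N2).trans ((le_max_right N0 _).trans
            (le_max_left _ _))) h2')
          (fun i hi hif => derAt_mono ((le_max_left N0 _).trans (le_max_left _ _))
            (hargsN i hi hif)))⟩
    | @teqA X0 u u' U hax h1 h2 =>
      have hXok : CtxOK X := mor_ctxok hAx hm
      obtain ⟨N0, hctx, hargsN⟩ := mor_stage hm
      obtain ⟨N1, h1'⟩ := ih _ h1 X f hm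
      obtain ⟨N2, h2'⟩ := ih _ h2 X f hm
      refine ⟨max (max N0 (max N1 N2)) (n + 1) + 1, Or.inr
        (Step.teqSub1 hax hXok.1 hm.2.2.1
          (derAt_mono (le_max_right _ _) hself)
          (derAt_mono ((le_max_left N1 N2).trans ((le_max_right N0 _).trans
            (le_max_left _ _))) h1')
          (derAt_mono ((le_max_right N1 N2).trans ((le_max_right N0 _).trans
            (le_max_left _ _))) h2')
          (fun i hi hif => derAt_mono ((le_max_left N0 _).trans (le_max_left _ _))
            (hargsN i hi hif)))⟩
    | @sSub Xa S hax Y0 hY0 g hlen hJ hYc hargs =>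
      have hXok : CtxOK X := mor_ctxok hAx hm
      have hXa : IsPreCtx Xa := hAx.wf_ctx _ hax
      obtain ⟨Nc, hc⟩ := comp_args hXa hlen (fun i hi hig => ih _ (hargs i hi hig) X f hm)
      obtain ⟨N0, h0⟩ := hm.1
      refine ⟨max (max Nc N0) (n + 1) + 1, Or.inr ?_⟩
      show Step Ax (DerAt Ax (max (max Nc N0) (n + 1)))
        (.sort X ((⟨S, g⟩ : SortE A).substL (mkSub Y0 f)))
      have e : (⟨S, g⟩ : SortE A).substL (mkSub Y0 f) = ⟨S, compMor Y0 f g⟩ := rfl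
      rw [e]
      exact Step.sSub hax hXok.1 (by simp [compMor, hlen])
        (derAt_mono (by omega) hJ)
        (derAt_mono ((le_max_right Nc N0).trans (le_max_left _ _)) h0)
        (fun i hi hif =>
          derAt_mono ((le_max_left Nc N0).trans (le_max_left _ _)) (hc i hi hif))
    | @tSub Xa t U hax Y0 hY0 g hlen hJ hU hargs =>
      have hXok : CtxOK X := mor_ctxok hAx hm
      have hXa : IsPreCtx Xa := hAx.wf_ctx _ hax
      have hUsc : SortScoped Xa U := (sanity hAx n _ hJ).2.2
      obtain ⟨Nc, hc⟩ := comp_args hXa hlen (fun i hi hig => ih _ (hargs i hi hig) X f hm)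
      obtain ⟨NU, hU'⟩ := ih _ hU X f hm
      have etyp : (U.substL (mkSub Xa g)).substL (mkSub Y0 f)
          = U.substL (mkSub Xa (compMor Y0 f g)) :=
        SortE.substL_substL (by omega) hUsc _
      refine ⟨max (max Nc NU) (n + 1) + 1, Or.inr ?_⟩
      show Step Ax (DerAt Ax (max (max Nc NU) (n + 1)))
        (.term X ((Expr.app t g).substL (mkSub Y0 f))
          ((U.substL (mkSub Xa g)).substL (mkSub Y0 f)))
      rw [Expr.substL_app, etyp]
      have hU'' : DerAt Ax NU
          (.sort X ((U.substL (mkSub Xa g)).substL (mkSub Y0 f))) := hU'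
      rw [etyp] at hU''
      exact Step.tSub hax hXok.1 (by simp [compMor, hlen])
        (derAt_mono (by omega) hJ)
        (derAt_mono ((le_max_right Nc NU).trans (le_max_left _ _)) hU'')
        (fun i hi hif =>
          derAt_mono ((le_max_left Nc NU).trans (le_max_left _ _)) (hc i hi hif))
    | @seqSub1 Xa U U' hax Y0 hY0 g hlen hJ h1 h2 hargs =>
      have hXok : CtxOK X := mor_ctxok hAx hm
      have hXa : IsPreCtx Xa := hAx.wf_ctx _ hax
      obtain ⟨_, hUsc, hU'sc⟩ := sanity hAx n _ hJ
      obtain ⟨Nc, hc⟩ := comp_args hXa hlen (fun i hi hig => ih _ (hargs i hi hig) X f hm)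
      obtain ⟨N1, h1'⟩ := ih _ h1 X f hm
      obtain ⟨N2, h2'⟩ := ih _ h2 X f hm
      have e1 : (U.substL (mkSub Xa g)).substL (mkSub Y0 f)
          = U.substL (mkSub Xa (compMor Y0 f g)) :=
        SortE.substL_substL (by omega) hUsc _
      have e2 : (U'.substL (mkSub Xa g)).substL (mkSub Y0 f)
          = U'.substL (mkSub Xa (compMor Y0 f g)) :=
        SortE.substL_substL (by omega) hU'sc _
      refine ⟨max (max Nc (max N1 N2)) (n + 1) + 1, Or.inr ?_⟩
      show Step Ax (DerAt Ax (max (max Nc (max N1 N2)) (n + 1)))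
        (.sortEq X ((U.substL (mkSub Xa g)).substL (mkSub Y0 f))
          ((U'.substL (mkSub Xa g)).substL (mkSub Y0 f)))
      rw [e1, e2]
      have h1'' : DerAt Ax N1
          (.sort X ((U.substL (mkSub Xa g)).substL (mkSub Y0 f))) := h1'
      have h2'' : DerAt Ax N2
          (.sort X ((U'.substL (mkSub Xa g)).substL (mkSub Y0 f))) := h2'
      rw [e1] at h1''
      rw [e2] at h2''
      exact Step.seqSub1 hax hXok.1 (by simp [compMor, hlen])
        (derAt_mono (by omega) hJ)
        (derAt_mono ((le_max_left N1 N2).trans ((le_max_right Nc _).trans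
          (le_max_left _ _))) h1'')
        (derAt_mono ((le_max_right N1 N2).trans ((le_max_right Nc _).trans
          (le_max_left _ _))) h2'')
        (fun i hi hif =>
          derAt_mono ((le_max_left Nc _).trans (le_max_left _ _)) (hc i hi hif))
    | @seqSub2 Xa S hax Y0 hY0 g1 g2 hlf hlg hJ h1 h2 hargs =>
      have hXok : CtxOK X := mor_ctxok hAx hm
      have hXa : IsPreCtx Xa := hAx.wf_ctx _ hax
      obtain ⟨Nc, hc⟩ := comp_args_eq hXa hlf
        (fun i hi hi1 hi2 => ih _ (hargs i hi hi1 hi2) X f hm) hlg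
      obtain ⟨N1, h1'⟩ := ih _ h1 X f hm
      obtain ⟨N2, h2'⟩ := ih _ h2 X f hm
      refine ⟨max (max Nc (max N1 N2)) (n + 1) + 1, Or.inr ?_⟩
      show Step Ax (DerAt Ax (max (max Nc (max N1 N2)) (n + 1)))
        (.sortEq X ((⟨S, g1⟩ : SortE A).substL (mkSub Y0 f))
          ((⟨S, g2⟩ : SortE A).substL (mkSub Y0 f)))
      have e1 : (⟨S, g1⟩ : SortE A).substL (mkSub Y0 f) = ⟨S, compMor Y0 f g1⟩ := rfl
      have e2 : (⟨S, g2⟩ : SortE A).substL (mkSub Y0 f) = ⟨S, compMor Y0 f g2⟩ := rfl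
      rw [e1, e2]
      have h1'' : DerAt Ax N1 (.sort X (⟨S, compMor Y0 f g1⟩ : SortE A)) := h1'
      have h2'' : DerAt Ax N2 (.sort X (⟨S, compMor Y0 f g2⟩ : SortE A)) := h2'
      exact Step.seqSub2 hax hXok.1 (by simp [compMor, hlf]) (by simp [compMor, hlg])
        (derAt_mono (by omega) hJ)
        (derAt_mono ((le_max_left N1 N2).trans ((le_max_right Nc _).trans
          (le_max_left _ _))) h1'')
        (derAt_mono ((le_max_right N1 N2).trans ((le_max_right Nc _).trans
          (le_max_left _ _))) h2'')
        (fun i hi h1 h2 =>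
          derAt_mono ((le_max_left Nc _).trans (le_max_left _ _)) (hc i hi h1 h2))
    | @teqSub1 Xa u u' U hax Y0 hY0 g hlen hJ h1 h2 hargs =>
      have hXok : CtxOK X := mor_ctxok hAx hm
      have hXa : IsPreCtx Xa := hAx.wf_ctx _ hax
      obtain ⟨_, husc, hu'sc, hUsc⟩ := sanity hAx n _ hJ
      obtain ⟨Nc, hc⟩ := comp_args hXa hlen (fun i hi hig => ih _ (hargs i hi hig) X f hm)
      obtain ⟨N1, h1'⟩ := ih _ h1 X f hm
      obtain ⟨N2, h2'⟩ := ih _ h2 X f hm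
      have eu : (u.substL (mkSub Xa g)).substL (mkSub Y0 f)
          = u.substL (mkSub Xa (compMor Y0 f g)) :=
        Expr.substL_substL (by omega) husc _
      have eu' : (u'.substL (mkSub Xa g)).substL (mkSub Y0 f)
          = u'.substL (mkSub Xa (compMor Y0 f g)) :=
        Expr.substL_substL (by omega) hu'sc _
      have eU : (U.substL (mkSub Xa g)).substL (mkSub Y0 f)
          = U.substL (mkSub Xa (compMor Y0 f g)) :=
        SortE.substL_substL (by omega) hUsc _
      refine ⟨max (max Nc (max N1 N2)) (n + 1) + 1, Or.inr ?_⟩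
      show Step Ax (DerAt Ax (max (max Nc (max N1 N2)) (n + 1)))
        (.termEq X ((u.substL (mkSub Xa g)).substL (mkSub Y0 f))
          ((u'.substL (mkSub Xa g)).substL (mkSub Y0 f))
          ((U.substL (mkSub Xa g)).substL (mkSub Y0 f)))
      rw [eu, eu', eU]
      have h1'' : DerAt Ax N1
          (.term X ((u.substL (mkSub Xa g)).substL (mkSub Y0 f))
            ((U.substL (mkSub Xa g)).substL (mkSub Y0 f))) := h1'
      have h2'' : DerAt Ax N2
          (.term X ((u'.substL (mkSub Xa g)).substL (mkSub Y0 f))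
            ((U.substL (mkSub Xa g)).substL (mkSub Y0 f))) := h2'
      rw [eu, eU] at h1''
      rw [eu', eU] at h2''
      exact Step.teqSub1 hax hXok.1 (by simp [compMor, hlen])
        (derAt_mono (by omega) hJ)
        (derAt_mono ((le_max_left N1 N2).trans ((le_max_right Nc _).trans
          (le_max_left _ _))) h1'')
        (derAt_mono ((le_max_right N1 N2).trans ((le_max_right Nc _).trans
          (le_max_left _ _))) h2'')
        (fun i hi hif =>
          derAt_mono ((le_max_left Nc _).trans (le_max_left _ _)) (hc i hi hif))
    | @teqSub2 Xa t U hax Y0 hY0 g1 g2 hlf hlg hJ h1 h2 hargs =>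
      have hXok : CtxOK X := mor_ctxok hAx hm
      have hXa : IsPreCtx Xa := hAx.wf_ctx _ hax
      have hUsc : SortScoped Xa U := (sanity hAx n _ hJ).2.2
      obtain ⟨Nc, hc⟩ := comp_args_eq hXa hlf
        (fun i hi hi1 hi2 => ih _ (hargs i hi hi1 hi2) X f hm) hlg
      obtain ⟨N1, h1'⟩ := ih _ h1 X f hm
      obtain ⟨N2, h2'⟩ := ih _ h2 X f hm
      have eU : (U.substL (mkSub Xa g1)).substL (mkSub Y0 f)
          = U.substL (mkSub Xa (compMor Y0 f g1)) :=
        SortE.substL_substL (by omega) hUsc _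
      refine ⟨max (max Nc (max N1 N2)) (n + 1) + 1, Or.inr ?_⟩
      show Step Ax (DerAt Ax (max (max Nc (max N1 N2)) (n + 1)))
        (.termEq X ((Expr.app t g1).substL (mkSub Y0 f))
          ((Expr.app t g2).substL (mkSub Y0 f))
          ((U.substL (mkSub Xa g1)).substL (mkSub Y0 f)))
      rw [Expr.substL_app, Expr.substL_app, eU]
      have h1'' : DerAt Ax N1
          (.term X ((Expr.app t g1).substL (mkSub Y0 f))
            ((U.substL (mkSub Xa g1)).substL (mkSub Y0 f))) := h1'
      have h2'' : DerAt Ax N2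
          (.term X ((Expr.app t g2).substL (mkSub Y0 f))
            ((U.substL (mkSub Xa g1)).substL (mkSub Y0 f))) := h2'
      rw [Expr.substL_app, eU] at h1''
      rw [Expr.substL_app, eU] at h2''
      exact Step.teqSub2 hax hXok.1 (by simp [compMor, hlf]) (by simp [compMor, hlg])
        (derAt_mono (by omega) hJ)
        (derAt_mono ((le_max_left N1 N2).trans ((le_max_right Nc _).trans
          (le_max_left _ _))) h1'')
        (derAt_mono ((le_max_right N1 N2).trans ((le_max_right Nc _).trans
          (le_max_left _ _))) h2'')
        (fun i hi h1 h2 =>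
          derAt_mono ((le_max_left Nc _).trans (le_max_left _ _)) (hc i hi h1 h2))

end Aux

/-- In a pretheory, the composite `g ∘ f` of context morphisms
`f : X → Y` and `g : Y → Z` (with `i`-th entry `gᵢ[f]`) is a context morphism
from `X` to `Z`. -/
theorem composite_is_morphism (A : Alphabet) (Ax : Set (Judg A)) (hAx : IsPretheory Ax)
    (X Y Z : PreCtx A) (f g : List (Expr A))
    (hf : IsMor Ax X Y f) (hg : IsMor Ax Y Z g) :
    IsMor Ax X Z (compMor Y f g) := by
  obtain ⟨hgY, hgZ, hglen, hgargs⟩ := hg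
  have hZ : IsPreCtx Z := by
    obtain ⟨N, hN⟩ := hgZ
    exact (sanity hAx N _ hN).1
  refine ⟨hf.1, hgZ, by simp [compMor, hglen], ?_⟩
  intro i hi hif
  have hig : i < g.length := by omega
  obtain ⟨N, hN⟩ := hgargs i hi hig
  have h := subst_derivable hAx N _ hN X f hf
  have h' : Derivable Ax (.term X ((g[i]'hig).substL (mkSub Y f))
      ((subPre Z g i hi).substL (mkSub Y f))) := h
  rw [subPre_comp hZ (by omega) hi] at h'
  have e : (compMor Y f g)[i]'hif = (g[i]'hig).substL (mkSub Y f) := by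
    simp [compMor]
  rw [e]
  exact h'

end GATPaper
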